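/- (Convergence of the corrected complex-valued multistate Hopfield network.) Let K ≥ 2 be an integer, let S_K = { exp(2πi k / K) : k = 0,…,K−1 } be the K-th roots of unity, let D_K = { z ∈ ℂ : z ≠ 0 and there exists u ∈ S_K with |arg(z · conj u)| < π/K }, and for z ∈ D_K let csgn(z) denote the unique u ∈ S_K with |arg(z · conj u)| < π/K. Let N ≥ 1 and let (w_ij) be an N×N complex matrix with w_ij = conj(w_ji) for all i, j, and with each diagonal entry w_ii a nonnegative real number (the case w_ii = 0 included). Then for every update schedule σ : ℕ → {1,…,N} and every initial state x(0) ∈ (S_K)^N, the asynchronous trajectory defined by x_i(t+1) = csgn(v_i(t)) if i = σ(t) and v_i(t) ∈ D_K, and x_i(t+1) = x_i(t) otherwise, where v_i(t) = Σⱼ w_ij · x_j(t), is eventually constant: there exists T such that x(t) = x(T) for all t ≥ T. -/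

import Mathlib

open Complex

private lemma cos_key (K : ℕ) (hK : 2 ≤ K) (θ φ : ℝ) (hθ : |θ| < Real.pi / K)
    (hφ1 : 2 * Real.pi / K ≤ |φ|) (hφ2 : |φ| ≤ 2 * Real.pi - 2 * Real.pi / K) :
    Real.cos (θ + φ) < Real.cos θ := by
  have hπ := Real.pi_pos
  have hK0 : (2:ℝ) ≤ K := by exact_mod_cast hK
  have hKpos : (0:ℝ) < K := by linarith
  have hπK : 0 < Real.pi / K := div_pos hπ hKpos
  have hπK2 : Real.pi / K ≤ Real.pi / 2 := by
    apply div_le_div_of_nonneg_left hπ.le (by norm_num) hK0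
  have h2πK : 2 * Real.pi / K = 2 * (Real.pi / K) := by ring
  have h1 : Real.cos (Real.pi / K) < Real.cos θ := by
    rw [← Real.cos_abs θ]
    exact Real.cos_lt_cos_of_nonneg_of_le_pi (abs_nonneg θ) (by linarith) hθ
  have hψ1 : Real.pi / K < |θ + φ| := by
    have h := abs_add_le (θ + φ) (-θ)
    rw [abs_neg] at h
    have h' : θ + φ + -θ = φ := by ring
    rw [h'] at h
    rw [h2πK] at hφ1
    linarith
  have hψ2 : |θ + φ| < 2 * Real.pi - Real.pi / K := by
    have h := abs_add_le θ φ
    rw [h2πK] at hφ2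
    linarith
  have h2 : Real.cos (θ + φ) < Real.cos (Real.pi / K) := by
    rw [← Real.cos_abs (θ + φ)]
    rcases le_or_gt (|θ + φ|) Real.pi with h | h
    · exact Real.cos_lt_cos_of_nonneg_of_le_pi hπK.le h hψ1
    · rw [show |θ + φ| = 2 * Real.pi - (2 * Real.pi - |θ + φ|) by ring,
        Real.cos_two_pi_sub]
      exact Real.cos_lt_cos_of_nonneg_of_le_pi hπK.le (by linarith) (by linarith)
  linarith
private lemma root_form (K k : ℕ) :
    Complex.exp (2 * Real.pi * Complex.I * k / K) =
      Complex.exp (((2 * Real.pi * k / K : ℝ) : ℂ) * Complex.I) := by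
  congr 1
  push_cast
  ring

private lemma conj_exp_real_mul_I (t : ℝ) :
    (starRingEnd ℂ) (Complex.exp ((t : ℂ) * Complex.I)) =
      Complex.exp (-(t : ℂ) * Complex.I) := by
  rw [← Complex.exp_conj, map_mul, Complex.conj_ofReal, Complex.conj_I]
  ring_nf

private lemma key_lt (K : ℕ) (hK : 2 ≤ K) (v : ℂ) (hv : v ≠ 0) (ka kb : ℕ)
    (hka : ka < K) (hkb : kb < K) (hne : ka ≠ kb)
    (hb : |(v * (starRingEnd ℂ) (Complex.exp (2 * Real.pi * Complex.I * kb / K))).arg|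
       < Real.pi / K) :
    (v * (starRingEnd ℂ) (Complex.exp (2 * Real.pi * Complex.I * ka / K))).re
      < (v * (starRingEnd ℂ) (Complex.exp (2 * Real.pi * Complex.I * kb / K))).re := by
  have hπ := Real.pi_pos
  have hK0 : (2:ℝ) ≤ K := by exact_mod_cast hK
  have hKpos : (0:ℝ) < K := by linarith
  set ta : ℝ := 2 * Real.pi * ka / K with hta
  set tb : ℝ := 2 * Real.pi * kb / K with htb
  set a : ℂ := Complex.exp (2 * Real.pi * Complex.I * ka / K) with ha
  set b : ℂ := Complex.exp (2 * Real.pi * Complex.I * kb / K) with hb'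
  have haf : a = Complex.exp ((ta : ℂ) * Complex.I) := root_form K ka
  have hbf : b = Complex.exp ((tb : ℂ) * Complex.I) := root_form K kb
  have habs_b : ‖b‖ = 1 := by rw [hbf]; exact Complex.norm_exp_ofReal_mul_I tb
  set z := v * (starRingEnd ℂ) b with hz
  set θ := z.arg with hθdef
  have hzabs : ‖z‖ = ‖v‖ := by
    rw [hz, norm_mul, Complex.norm_conj, habs_b, mul_one]
  have hzeq : z = ((‖v‖ : ℝ) : ℂ) * Complex.exp ((θ : ℂ) * Complex.I) := by
    rw [hθdef, ← hzabs]
    exact (Complex.norm_mul_exp_arg_mul_I z).symm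
  have hbb : b * (starRingEnd ℂ) b = 1 := by
    rw [Complex.mul_conj, Complex.normSq_eq_norm_sq, habs_b]
    norm_num
  have hva : v * (starRingEnd ℂ) a = z * (b * (starRingEnd ℂ) a) := by
    rw [hz]
    calc v * (starRingEnd ℂ) a = v * (starRingEnd ℂ) a * (b * (starRingEnd ℂ) b) := by
          rw [hbb, mul_one]
      _ = v * (starRingEnd ℂ) b * (b * (starRingEnd ℂ) a) := by ring
  set φ : ℝ := tb - ta with hφdef
  have hbca : b * (starRingEnd ℂ) a = Complex.exp ((φ : ℂ) * Complex.I) := by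
    rw [hbf, haf, conj_exp_real_mul_I, ← Complex.exp_add, hφdef]
    congr 1
    push_cast
    ring
  have hva2 : v * (starRingEnd ℂ) a
      = ((‖v‖ : ℝ) : ℂ) * Complex.exp (((θ + φ : ℝ) : ℂ) * Complex.I) := by
    rw [hva, hzeq, hbca, mul_assoc, ← Complex.exp_add]
    congr 2
    push_cast
    ring
  have hre_a : (v * (starRingEnd ℂ) a).re = ‖v‖ * Real.cos (θ + φ) := by
    rw [hva2, Complex.re_ofReal_mul, Complex.exp_ofReal_mul_I_re]
  have hre_b : z.re = ‖v‖ * Real.cos θ := by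
    rw [hzeq, Complex.re_ofReal_mul, Complex.exp_ofReal_mul_I_re]
  have hd : (1:ℝ) ≤ |(kb : ℝ) - ka| ∧ |(kb : ℝ) - ka| ≤ (K : ℝ) - 1 := by
    rcases Nat.lt_or_ge ka kb with h | h
    · have h1 : (ka : ℝ) + 1 ≤ kb := by exact_mod_cast h
      have h2 : (kb : ℝ) + 1 ≤ K := by exact_mod_cast hkb
      have h3 : (0:ℝ) ≤ ka := Nat.cast_nonneg ka
      rw [_root_.abs_of_nonneg (by linarith)]
      constructor <;> linarith
    · have h' : kb < ka := lt_of_le_of_ne h (Ne.symm hne)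
      have h1 : (kb : ℝ) + 1 ≤ ka := by exact_mod_cast h'
      have h2 : (ka : ℝ) + 1 ≤ K := by exact_mod_cast hka
      have h3 : (0:ℝ) ≤ kb := Nat.cast_nonneg kb
      rw [abs_of_nonpos (by linarith), neg_sub]
      constructor <;> linarith
  have hφabs : |φ| = 2 * Real.pi / K * |(kb : ℝ) - ka| := by
    rw [hφdef, hta, htb]
    rw [show 2 * Real.pi * kb / K - 2 * Real.pi * ka / K
        = 2 * Real.pi / K * ((kb : ℝ) - ka) by field_simp]
    rw [abs_mul, _root_.abs_of_pos (by positivity)]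
  have hpos2 : (0:ℝ) < 2 * Real.pi / K := by positivity
  have hφ1 : 2 * Real.pi / K ≤ |φ| := by
    rw [hφabs]
    have h := mul_le_mul_of_nonneg_left hd.1 hpos2.le
    rw [mul_one] at h
    exact h
  have hφ2 : |φ| ≤ 2 * Real.pi - 2 * Real.pi / K := by
    rw [hφabs]
    have hup : 2 * Real.pi / K * |(kb : ℝ) - ka| ≤ 2 * Real.pi / K * ((K:ℝ) - 1) :=
      mul_le_mul_of_nonneg_left hd.2 hpos2.le
    have hKne : (K:ℝ) ≠ 0 := ne_of_gt hKpos
    have heq : 2 * Real.pi / K * ((K:ℝ) - 1) = 2 * Real.pi - 2 * Real.pi / K := by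
      field_simp
    linarith
  have hcos := cos_key K hK θ φ hb hφ1 hφ2
  have habsv : 0 < ‖v‖ := norm_pos_iff.mpr hv
  rw [hre_a, hre_b]
  exact mul_lt_mul_of_pos_left hcos habsv
private noncomputable def energyE (N : ℕ) (w : Fin N → Fin N → ℂ) (y : Fin N → ℂ) : ℝ :=
  -(∑ p, ∑ q, ((starRingEnd ℂ) (y p) * w p q * y q)).re

private lemma energy_drop (N : ℕ) (w : Fin N → Fin N → ℂ)
    (hsym : ∀ i j, w i j = (starRingEnd ℂ) (w j i))
    (i : Fin N) (r : ℝ) (hr : 0 ≤ r) (hwii : w i i = (r : ℂ))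
    (x y : Fin N → ℂ) (hy : ∀ j, j ≠ i → y j = x j)
    (hre : ((∑ j, w i j * x j) * (starRingEnd ℂ) (x i)).re
         < ((∑ j, w i j * x j) * (starRingEnd ℂ) (y i)).re) :
    energyE N w y < energyE N w x := by
  set v := ∑ j, w i j * x j with hv
  set a := x i with ha
  set b := y i with hb
  have hΔ : (∑ p, ∑ q, ((starRingEnd ℂ) (y p) * w p q * y q))
        - (∑ p, ∑ q, ((starRingEnd ℂ) (x p) * w p q * x q))
      = ((starRingEnd ℂ) b * v + (starRingEnd ℂ) v * b)
        - ((starRingEnd ℂ) a * v + (starRingEnd ℂ) v * a)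
        + (r:ℂ) * ((starRingEnd ℂ) (b - a) * (b - a)) := by
    rw [← Finset.sum_sub_distrib]
    have hg : ∀ p, (∑ q, ((starRingEnd ℂ) (y p) * w p q * y q))
          - (∑ q, ((starRingEnd ℂ) (x p) * w p q * x q))
        = ∑ q, ((starRingEnd ℂ) (y p) * w p q * y q
            - (starRingEnd ℂ) (x p) * w p q * x q) := by
      intro p; rw [Finset.sum_sub_distrib]
    simp_rw [hg]
    rw [← Finset.add_sum_erase Finset.univ _ (Finset.mem_univ i)]
    have hrow : (∑ q, ((starRingEnd ℂ) (y i) * w i q * y q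
          - (starRingEnd ℂ) (x i) * w i q * x q))
        = (starRingEnd ℂ) b * (v + (r:ℂ) * (b - a)) - (starRingEnd ℂ) a * v := by
      have h1 : ∑ q, ((starRingEnd ℂ) (y i) * w i q * y q
            - (starRingEnd ℂ) (x i) * w i q * x q)
          = (starRingEnd ℂ) b * (∑ q, w i q * y q)
            - (starRingEnd ℂ) a * (∑ q, w i q * x q) := by
        rw [Finset.sum_sub_distrib]
        congr 1
        · rw [Finset.mul_sum]; exact Finset.sum_congr rfl fun q _ => by rw [← hb]; ring
        · rw [Finset.mul_sum]; exact Finset.sum_congr rfl fun q _ => by rw [← ha]; ring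
      have h2 : (∑ q, w i q * y q) = v + (r:ℂ) * (b - a) := by
        have h3 : (∑ q, w i q * y q) - (∑ q, w i q * x q)
            = ∑ q, w i q * (y q - x q) := by
          rw [← Finset.sum_sub_distrib]
          exact Finset.sum_congr rfl fun q _ => by ring
        have h4 : ∑ q, w i q * (y q - x q) = (r:ℂ) * (b - a) := by
          rw [Finset.sum_eq_single i]
          · rw [hwii, ← hb, ← ha]
          · intro q _ hq; rw [hy q hq]; ring
          · intro h; exact absurd (Finset.mem_univ i) h
        rw [h4] at h3
        linear_combination h3
      rw [h1, h2]
    rw [hrow]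
    have hcol : (∑ p ∈ Finset.univ.erase i, (∑ q, ((starRingEnd ℂ) (y p) * w p q * y q
          - (starRingEnd ℂ) (x p) * w p q * x q)))
        = ((starRingEnd ℂ) v - (r:ℂ) * (starRingEnd ℂ) a) * (b - a) := by
      have h1 : ∀ p ∈ Finset.univ.erase i, (∑ q, ((starRingEnd ℂ) (y p) * w p q * y q
            - (starRingEnd ℂ) (x p) * w p q * x q))
          = (starRingEnd ℂ) (w i p * x p) * (b - a) := by
        intro p hp
        have hpne : p ≠ i := (Finset.mem_erase.mp hp).1
        rw [Finset.sum_eq_single i]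
        · rw [hy p hpne, ← hb, ← ha, hsym p i, map_mul]
          ring
        · intro q _ hq
          rw [hy p hpne, hy q hq]; ring
        · intro h; exact absurd (Finset.mem_univ i) h
      rw [Finset.sum_congr rfl h1, ← Finset.sum_mul]
      congr 1
      rw [← map_sum]
      have h5 : (∑ p ∈ Finset.univ.erase i, w i p * x p) = v - (r:ℂ) * a := by
        have h6 := Finset.add_sum_erase Finset.univ (fun p => w i p * x p) (Finset.mem_univ i)
        rw [hwii, ← ha] at h6
        linear_combination h6
      rw [h5, map_sub, map_mul, Complex.conj_ofReal]
    rw [hcol, map_sub]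
    ring
  have hre1 : ((starRingEnd ℂ) v * b).re = (v * (starRingEnd ℂ) b).re := by
    have h : (starRingEnd ℂ) (v * (starRingEnd ℂ) b) = (starRingEnd ℂ) v * b := by
      rw [map_mul, Complex.conj_conj]
    rw [← h, Complex.conj_re]
  have hre2 : ((starRingEnd ℂ) v * a).re = (v * (starRingEnd ℂ) a).re := by
    have h : (starRingEnd ℂ) (v * (starRingEnd ℂ) a) = (starRingEnd ℂ) v * a := by
      rw [map_mul, Complex.conj_conj]
    rw [← h, Complex.conj_re]
  have hre3 : ((r:ℂ) * ((starRingEnd ℂ) (b - a) * (b - a))).re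
      = r * Complex.normSq (b - a) := by
    rw [mul_comm ((starRingEnd ℂ) (b - a)) (b - a), Complex.mul_conj,
      ← Complex.ofReal_mul, Complex.ofReal_re]
  have e1 : ((starRingEnd ℂ) b * v).re = (v * (starRingEnd ℂ) b).re := by rw [mul_comm]
  have e2 : ((starRingEnd ℂ) a * v).re = (v * (starRingEnd ℂ) a).re := by rw [mul_comm]
  have hpos : 0 < ((∑ p, ∑ q, ((starRingEnd ℂ) (y p) * w p q * y q))
      - (∑ p, ∑ q, ((starRingEnd ℂ) (x p) * w p q * x q))).re := by
    rw [hΔ, Complex.add_re, Complex.sub_re, Complex.add_re, Complex.add_re, hre3,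
      e1, hre1, e2, hre2]
    have h9 : 0 ≤ r * Complex.normSq (b - a) := mul_nonneg hr (Complex.normSq_nonneg _)
    linarith [hre]
  rw [Complex.sub_re] at hpos
  unfold energyE
  linarith [hpos]

theorem corrected_multistate_cvhnn_convergence (K : ℕ) (hK : 2 ≤ K)
    (SK : Set ℂ)
    (hSK : SK = {u : ℂ | ∃ k : ℕ, k < K ∧
      u = Complex.exp (2 * Real.pi * Complex.I * k / K)})
    (DK : Set ℂ)
    (hDK : DK = {z : ℂ | z ≠ 0 ∧ ∃ u ∈ SK,
      |(z * (starRingEnd ℂ) u).arg| < Real.pi / K})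
    (N : ℕ) (hN : 1 ≤ N)
    (w : Fin N → Fin N → ℂ)
    (hsym : ∀ i j, w i j = (starRingEnd ℂ) (w j i))
    (hdiag : ∀ i, ∃ r : ℝ, 0 ≤ r ∧ w i i = (r : ℂ))
    (σ : ℕ → Fin N) (x : ℕ → Fin N → ℂ)
    (hx0 : ∀ i, x 0 i ∈ SK)
    (hdyn : ∀ t i,
      ((i = σ t ∧ (∑ j, w i j * x t j) ∈ DK) →
        x (t + 1) i ∈ SK ∧
        |((∑ j, w i j * x t j) * (starRingEnd ℂ) (x (t + 1) i)).arg|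
          < Real.pi / K) ∧
      (¬(i = σ t ∧ (∑ j, w i j * x t j) ∈ DK) →
        x (t + 1) i = x t i)) :
    ∃ T, ∀ t, T ≤ t → x t = x T := by
  -- the state always stays in SK
  have hmem : ∀ t i, x t i ∈ SK := by
    intro t
    induction t with
    | zero => exact hx0
    | succ t ih =>
      intro i
      by_cases h : i = σ t ∧ (∑ j, w i j * x t j) ∈ DK
      · exact ((hdyn t i).1 h).1
      · rw [(hdyn t i).2 h]; exact ih i
  -- energy step
  have hstep : ∀ t, x (t + 1) = x t ∨ energyE N w (x (t + 1)) < energyE N w (x t) := by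
    intro t
    by_cases hD : (∑ j, w (σ t) j * x t j) ∈ DK
    · by_cases hch : x (t + 1) (σ t) = x t (σ t)
      · left
        funext j
        by_cases hj : j = σ t
        · rw [hj]; exact hch
        · exact (hdyn t j).2 (fun hcon => hj hcon.1)
      · right
        obtain ⟨hbSK, harg⟩ := (hdyn t (σ t)).1 ⟨rfl, hD⟩
        have haSK := hmem t (σ t)
        rw [hSK] at haSK hbSK
        obtain ⟨ka, hka, haeq⟩ := haSK
        obtain ⟨kb, hkb, hbeq⟩ := hbSK
        have hv : (∑ j, w (σ t) j * x t j) ≠ 0 := by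
          rw [hDK] at hD; exact hD.1
        have hne : ka ≠ kb := by
          intro h
          exact hch (by rw [hbeq, haeq, h])
        rw [hbeq] at harg
        have hre := key_lt K hK _ hv ka kb hka hkb hne harg
        rw [← haeq, ← hbeq] at hre
        obtain ⟨r, hr, hwii⟩ := hdiag (σ t)
        exact energy_drop N w hsym (σ t) r hr hwii (x t) (x (t + 1))
          (fun j hj => (hdyn t j).2 (fun hcon => hj hcon.1)) hre
    · left
      funext j
      refine (hdyn t j).2 (fun hcon => ?_)
      rw [hcon.1] at hcon
      exact hD hcon.2
  -- finiteness of reachable energies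
  have hSKfin : SK.Finite := by
    rw [hSK]
    have heq : {u : ℂ | ∃ k : ℕ, k < K ∧ u = Complex.exp (2 * Real.pi * Complex.I * k / K)}
        = (fun k : ℕ => Complex.exp (2 * Real.pi * Complex.I * k / K)) '' (Set.Iio K) := by
      ext u
      simp only [Set.mem_setOf_eq, Set.mem_image, Set.mem_Iio]
      constructor
      · rintro ⟨k, hk, rfl⟩; exact ⟨k, hk, rfl⟩
      · rintro ⟨k, hk, rfl⟩; exact ⟨k, hk, rfl⟩
    rw [heq]
    exact (Set.finite_Iio K).image _
  have hstatefin : {y : Fin N → ℂ | ∀ i, y i ∈ SK}.Finite := by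
    have h := Set.Finite.pi (fun _ : Fin N => hSKfin)
    exact h.subset (by
      intro y hy
      rw [Set.mem_pi]
      exact fun i _ => hy i)
  have hrangefin : (Set.range (fun t => energyE N w (x t))).Finite := by
    apply (hstatefin.image (energyE N w)).subset
    rintro _ ⟨t, rfl⟩
    exact ⟨x t, fun i => hmem t i, rfl⟩
  -- pick time of minimal energy
  set e : ℕ → ℝ := fun t => energyE N w (x t) with he
  have hne0 : hrangefin.toFinset.Nonempty := by
    refine ⟨e 0, ?_⟩
    rw [Set.Finite.mem_toFinset]
    exact ⟨0, rfl⟩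
  obtain ⟨T, hT⟩ : ∃ T, e T = hrangefin.toFinset.min' hne0 := by
    have hmem' : hrangefin.toFinset.min' hne0 ∈ hrangefin.toFinset :=
      hrangefin.toFinset.min'_mem hne0
    rw [Set.Finite.mem_toFinset] at hmem'
    obtain ⟨T, hT⟩ := hmem'
    exact ⟨T, hT⟩
  have hmin : ∀ t, e T ≤ e t := by
    intro t
    rw [hT]
    apply Finset.min'_le
    rw [Set.Finite.mem_toFinset]
    exact ⟨t, rfl⟩
  have hdec : ∀ t, e (t + 1) ≤ e t := by
    intro t
    rcases hstep t with h | h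
    · simp only [he]; rw [h]
    · exact le_of_lt h
  have hanti : Antitone e := antitone_nat_of_succ_le hdec
  have hconst : ∀ t, T ≤ t → e t = e T := by
    intro t ht
    exact le_antisymm (hanti ht) (hmin t)
  have hfix : ∀ t, T ≤ t → x (t + 1) = x t := by
    intro t ht
    rcases hstep t with h | h
    · exact h
    · exfalso
      have h1 : e (t + 1) = e T := hconst (t + 1) (le_trans ht (Nat.le_succ t))
      have h2 : e t = e T := hconst t ht
      have : e (t + 1) < e t := h
      rw [h1, h2] at this
      exact lt_irrefl _ this
  refine ⟨T, fun t ht => ?_⟩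
  obtain ⟨d, rfl⟩ := Nat.exists_eq_add_of_le ht
  induction d with
  | zero => rfl
  | succ d ih =>
    rw [show T + (d + 1) = (T + d) + 1 by ring, hfix (T + d) (Nat.le_add_right T d)]
    exact ih (Nat.le_add_right T d)
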